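/- Let λ₁ ≥ λ₂ ≥ ... ≥ λₙ ≥ 0 be a non-increasing sequence of nonnegative reals and let l be an integer with 1 ≤ 2l < n. Then 2λ_{2l+1} + (1/(2l))·∑_{i>2l} λᵢ ≤ (2/l)·∑_{i>l} λᵢ. -/
import Mathlib


open Finset

/-- For a non-increasing sequence `lam 0 ≥ lam 1 ≥ ... ≥ lam (n-1) ≥ 0`
(1-based `λ₁ ≥ ... ≥ λₙ`) and an integer `l` with `1 ≤ 2l < n`:
`2 λ_{2l+1} + (1/(2l)) ∑_{i>2l} λᵢ ≤ (2/l) ∑_{i>l} λᵢ`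
(1-based index `i > k` corresponds to 0-based index `i ≥ k`). -/
theorem tail_sum_doubling_bound
    (n : ℕ) (lam : Fin n → ℝ) (hmono : Antitone lam) (hnn : ∀ i, 0 ≤ lam i)
    (l : ℕ) (hl : 1 ≤ l) (hln : 2 * l < n) :
    2 * lam ⟨2 * l, hln⟩
        + (1 / (2 * l : ℝ)) * ∑ i ∈ univ.filter (fun i : Fin n => 2 * l ≤ (i : ℕ)), lam i
      ≤ (2 / (l : ℝ)) * ∑ i ∈ univ.filter (fun i : Fin n => l ≤ (i : ℕ)), lam i := by
  set A := lam ⟨2 * l, hln⟩ with hA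
  set s : Finset (Fin n) := univ.filter (fun i : Fin n => l ≤ (i : ℕ) ∧ (i : ℕ) < 2 * l) with hs
  set t : Finset (Fin n) := univ.filter (fun i : Fin n => 2 * l ≤ (i : ℕ)) with ht
  have hcard : s.card = l := by
    have : s = (Finset.Ico l (2 * l)).attachFin
        (fun m hm => lt_trans (Finset.mem_Ico.mp hm).2 hln) := by
      ext i
      simp [hs, Finset.mem_attachFin, Finset.mem_Ico]
    rw [this, Finset.card_attachFin, Nat.card_Ico]
    omega
  have hS : (l : ℝ) * A ≤ ∑ i ∈ s, lam i := by
    have : ∑ i ∈ s, A ≤ ∑ i ∈ s, lam i := by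
      apply Finset.sum_le_sum
      intro i hi
      rw [hs, Finset.mem_filter] at hi
      exact hmono (by exact_mod_cast le_of_lt hi.2.2)
    simpa [Finset.sum_const, hcard, nsmul_eq_mul] using this
  have hT2 : 0 ≤ ∑ i ∈ t, lam i := Finset.sum_nonneg fun i _ => hnn i
  have hsplit : ∑ i ∈ univ.filter (fun i : Fin n => l ≤ (i : ℕ)), lam i
      = (∑ i ∈ s, lam i) + ∑ i ∈ t, lam i := by
    rw [← Finset.sum_union]
    · congr 1
      ext i
      simp only [hs, ht, Finset.mem_union, Finset.mem_filter, Finset.mem_univ, true_and]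
      omega
    · rw [Finset.disjoint_left]
      intro i hi hit
      rw [hs, Finset.mem_filter] at hi
      rw [ht, Finset.mem_filter] at hit
      omega
  rw [hsplit]
  have hl' : (1 : ℝ) ≤ (l : ℝ) := by exact_mod_cast hl
  have hl0 : (0 : ℝ) < (l : ℝ) := by linarith
  have h2l : (0 : ℝ) < 2 * (l : ℝ) := by linarith
  have h1 : (1 : ℝ) / (2 * (l : ℝ)) ≤ 2 / (l : ℝ) := by
    rw [div_le_div_iff₀ h2l hl0]; linarith
  have h2 : 2 * A ≤ (2 / (l : ℝ)) * ∑ i ∈ s, lam i := by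
    rw [div_mul_eq_mul_div, le_div_iff₀ hl0]; nlinarith
  have h3 : (1 / (2 * (l : ℝ))) * ∑ i ∈ t, lam i ≤ (2 / (l : ℝ)) * ∑ i ∈ t, lam i :=
    mul_le_mul_of_nonneg_right h1 hT2
  rw [mul_add]
  linarith
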